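/- Let β₁, β₂, δ₁, δ₂ ≥ 0 with β₁+δ₁ > 0 and β₂+δ₂ > 0, α₁, α₂, γ₁, γ₂ > 0, |σ| < 1, 0 ≤ α < 1, and suppose |A_n| ≤ 1 and |B_n| ≤ 1 for all n. If (W'_{(α₁,β₁),(γ₁,δ₁)}(1) − 1) − α(W_{(α₁,β₁),(γ₁,δ₁)}(1) − 1) + |σ|(W'_{(α₂,β₂),(γ₂,δ₂)}(1) + α W_{(α₂,β₂),(γ₂,δ₂)}(1)) ≤ 1 − α, then ∑_{n=2}^∞ (n−α) |Γ(α₁)Γ(γ₁)/(Γ(α₁+(n−1)β₁)Γ(γ₁+(n−1)δ₁))| |A_n| + |σ| ∑_{n=1}^∞ (n+α) |Γ(α₂)Γ(γ₂)/(Γ(α₂+(n−1)β₂)Γ(γ₂+(n−1)δ₂))| |B_n| ≤ 1 − α. -/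

import Mathlib

open Filter Real Set

/-- The normalized four-parameter Wright function
`W_{(a,b),(c,d)}(x) = x + ∑_{n=2}^∞ Γ(a)Γ(c) xⁿ / (Γ(a+(n-1)b)Γ(c+(n-1)d))`
(as a function of a real variable, evaluated along the real axis). -/
noncomputable def wrightW (a b c d : ℝ) : ℝ → ℝ := fun x =>
  x + ∑' n : ℕ, Real.Gamma a * Real.Gamma c /
    (Real.Gamma (a + ((n : ℝ) + 1) * b) * Real.Gamma (c + ((n : ℝ) + 1) * d)) * x ^ (n + 2)

/-- From log-convexity of `Γ`: multiplicative lower bound on `Γ(x+b)/Γ(x)`. -/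
lemma gamma_conv {x b K : ℝ} (hx : 2 ≤ x) (hb : 0 < b) (hK : 1 ≤ K)
    (hxK : Real.log K / b ≤ Real.log (x - 1)) :
    K * Real.Gamma x ≤ Real.Gamma (x + b) := by
  have hx1 : (0:ℝ) < x - 1 := by linarith
  have hxpos : (0:ℝ) < x := by linarith
  have hxb : (0:ℝ) < x + b := by linarith
  have hK0 : (0:ℝ) < K := by linarith
  have hGx : 0 < Real.Gamma x := Real.Gamma_pos_of_pos hxpos
  have hGx1 : 0 < Real.Gamma (x - 1) := Real.Gamma_pos_of_pos hx1
  have hGxb : 0 < Real.Gamma (x + b) := Real.Gamma_pos_of_pos hxb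
  have hslope := Real.convexOn_log_Gamma.slope_mono_adjacent
      (x := x - 1) (y := x) (z := x + b)
      (by simpa using hx1) (by simpa using hxb)
      (by linarith) (by linarith)
  have hrec : Real.Gamma x = (x - 1) * Real.Gamma (x - 1) := by
    have := Real.Gamma_add_one (ne_of_gt hx1)
    simpa using this
  have hlogx : Real.log (Real.Gamma x) - Real.log (Real.Gamma (x - 1)) = Real.log (x - 1) := by
    rw [hrec, Real.log_mul (ne_of_gt hx1) (ne_of_gt hGx1)]
    ring
  simp only [Function.comp] at hslope
  have h1 : Real.log (x - 1) ≤ (Real.log (Real.Gamma (x + b)) - Real.log (Real.Gamma x)) / b := by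
    have e1 : x - (x - 1) = 1 := by ring
    rw [e1, div_one, hlogx] at hslope
    have e2 : x + b - x = b := by ring
    rwa [e2] at hslope
  have h2 : Real.log K ≤ Real.log (Real.Gamma (x + b)) - Real.log (Real.Gamma x) := by
    have ha := mul_le_mul_of_nonneg_left hxK hb.le
    rw [mul_div_cancel₀ _ (ne_of_gt hb)] at ha
    have h3 := mul_le_mul_of_nonneg_left h1 hb.le
    rw [mul_div_cancel₀ _ (ne_of_gt hb)] at h3
    linarith
  have h4 : Real.log (K * Real.Gamma x) ≤ Real.log (Real.Gamma (x + b)) := by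
    rw [Real.log_mul (ne_of_gt hK0) (ne_of_gt hGx)]; linarith
  calc K * Real.Gamma x = Real.exp (Real.log (K * Real.Gamma x)) := by
        rw [Real.exp_log (mul_pos hK0 hGx)]
    _ ≤ Real.exp (Real.log (Real.Gamma (x + b))) := Real.exp_le_exp.mpr h4
    _ = Real.Gamma (x + b) := Real.exp_log hGxb

lemma eventually_gamma_ratio {a b : ℝ} (K : ℝ) (ha : 0 < a) (hb : 0 < b) (hK : 1 ≤ K) :
    ∀ᶠ n : ℕ in atTop, K * Real.Gamma (a + ((n : ℝ) + 1) * b) ≤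
      Real.Gamma (a + ((n : ℝ) + 2) * b) := by
  have htend : Tendsto (fun n : ℕ => a + ((n : ℝ) + 1) * b) atTop atTop := by
    have h1 : Tendsto (fun n : ℕ => ((n : ℝ) + 1) * b) atTop atTop :=
      (tendsto_natCast_atTop_atTop.atTop_add tendsto_const_nhds).atTop_mul_const hb
    exact tendsto_atTop_add_const_left _ a h1
  filter_upwards [htend.eventually_ge_atTop (max 2 (Real.exp (Real.log K / b) + 1))] with n hn
  set x := a + ((n : ℝ) + 1) * b with hxdef
  have hx2 : 2 ≤ x := le_trans (le_max_left _ _) hn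
  have hxe : Real.exp (Real.log K / b) ≤ x - 1 := by
    have := le_trans (le_max_right _ _) hn; linarith
  have hlog : Real.log K / b ≤ Real.log (x - 1) :=
    (Real.le_log_iff_exp_le (by linarith [Real.exp_pos (Real.log K / b)])).mpr hxe
  have hfin := gamma_conv hx2 hb hK hlog
  have hxb : a + ((n : ℝ) + 2) * b = x + b := by rw [hxdef]; ring
  rw [hxb]; exact hfin

lemma eventually_gamma_mono {c d : ℝ} (hc : 0 < c) (hd : 0 ≤ d) :
    ∀ᶠ n : ℕ in atTop, Real.Gamma (c + ((n : ℝ) + 1) * d) ≤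
      Real.Gamma (c + ((n : ℝ) + 2) * d) := by
  rcases hd.eq_or_lt with h | h
  · simp [← h]
  · simpa using eventually_gamma_ratio 1 hc h le_rfl

lemma summable_weighted {a b c d : ℝ} (ha : 0 < a) (hc : 0 < c) (hb : 0 ≤ b) (hd : 0 ≤ d)
    (hbd : 0 < b + d) {R : ℝ} (hR : 1 ≤ R) :
    Summable (fun n : ℕ => ((n : ℝ) + 2) *
      (Real.Gamma a * Real.Gamma c /
        (Real.Gamma (a + ((n : ℝ) + 1) * b) * Real.Gamma (c + ((n : ℝ) + 1) * d))) * R ^ n) := by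
  set G := Real.Gamma a * Real.Gamma c with hG
  have hG0 : 0 < G := mul_pos (Real.Gamma_pos_of_pos ha) (Real.Gamma_pos_of_pos hc)
  set P : ℕ → ℝ := fun n => Real.Gamma (a + ((n : ℝ) + 1) * b) with hP
  set Q : ℕ → ℝ := fun n => Real.Gamma (c + ((n : ℝ) + 1) * d) with hQ
  have hPpos : ∀ n, 0 < P n := fun n => Real.Gamma_pos_of_pos (by positivity)
  have hQpos : ∀ n, 0 < Q n := fun n => Real.Gamma_pos_of_pos (by positivity)
  have hR0 : (0:ℝ) < R := by linarith
  have key : ∀ᶠ n : ℕ in atTop, (4 * R) * (P n * Q n) ≤ P (n + 1) * Q (n + 1) := by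
    have hshiftP : ∀ n : ℕ, P (n + 1) = Real.Gamma (a + ((n : ℝ) + 2) * b) := by
      intro n; rw [hP]; push_cast; ring_nf
    have hshiftQ : ∀ n : ℕ, Q (n + 1) = Real.Gamma (c + ((n : ℝ) + 2) * d) := by
      intro n; rw [hQ]; push_cast; ring_nf
    rcases lt_or_eq_of_le hb with hb' | hb'
    · filter_upwards [eventually_gamma_ratio (4 * R) ha hb' (by linarith),
        eventually_gamma_mono hc hd] with n h1 h2
      rw [hshiftP, hshiftQ]
      calc (4 * R) * (P n * Q n) = ((4 * R) * P n) * Q n := by ring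
        _ ≤ Real.Gamma (a + ((n : ℝ) + 2) * b) * Real.Gamma (c + ((n : ℝ) + 2) * d) :=
          mul_le_mul h1 h2 (hQpos n).le (by positivity)
    · have hd' : 0 < d := by rw [← hb'] at hbd; linarith
      filter_upwards [eventually_gamma_ratio (4 * R) hc hd' (by linarith),
        eventually_gamma_mono ha hb] with n h1 h2
      rw [hshiftP, hshiftQ]
      calc (4 * R) * (P n * Q n) = ((4 * R) * Q n) * P n := by ring
        _ ≤ Real.Gamma (c + ((n : ℝ) + 2) * d) * Real.Gamma (a + ((n : ℝ) + 2) * b) :=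
          mul_le_mul h1 h2 (hPpos n).le (by positivity)
        _ = _ := by ring
  apply summable_of_ratio_norm_eventually_le (r := 1/2) (by norm_num)
  filter_upwards [key] with n hn
  have hterm : ∀ m : ℕ, (0:ℝ) ≤ ((m : ℝ) + 2) * (G / (P m * Q m)) * R ^ m := by
    intro m
    have := hPpos m; have := hQpos m
    positivity
  rw [Real.norm_of_nonneg (hterm (n + 1)), Real.norm_of_nonneg (hterm n)]
  have hq : 0 < P (n + 1) * Q (n + 1) := mul_pos (hPpos _) (hQpos _)
  have hp : 0 < P n * Q n := mul_pos (hPpos n) (hQpos n)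
  have hcast : ((n + 1 : ℕ) : ℝ) + 2 = (n : ℝ) + 3 := by push_cast; ring
  rw [hcast]
  calc ((n : ℝ) + 3) * (G / (P (n+1) * Q (n+1))) * R ^ (n+1)
      ≤ ((n : ℝ) + 3) * (G / ((4 * R) * (P n * Q n))) * R ^ (n+1) := by
        gcongr
    _ = 1/2 * ((((n : ℝ) + 3)/2) * (G / (P n * Q n)) * R ^ n) := by
        rw [pow_succ]
        field_simp
        ring
    _ ≤ 1/2 * (((n : ℝ) + 2) * (G / (P n * Q n)) * R ^ n) := by
        gcongr
        · have : (0:ℝ) ≤ (n:ℝ) := Nat.cast_nonneg n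
          linarith

/-- The `n`-th Taylor coefficient (at `xⁿ⁺²`) of the Wright function. -/
noncomputable def wco (a b c d : ℝ) (n : ℕ) : ℝ :=
  Real.Gamma a * Real.Gamma c /
    (Real.Gamma (a + ((n : ℝ) + 1) * b) * Real.Gamma (c + ((n : ℝ) + 1) * d))

section
variable {a b c d : ℝ}

lemma wco_pos (ha : 0 < a) (hc : 0 < c) (hb : 0 ≤ b) (hd : 0 ≤ d) (n : ℕ) :
    0 < wco a b c d n := by
  unfold wco
  have h1 : 0 < Real.Gamma (a + ((n : ℝ) + 1) * b) := Real.Gamma_pos_of_pos (by positivity)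
  have h2 : 0 < Real.Gamma (c + ((n : ℝ) + 1) * d) := Real.Gamma_pos_of_pos (by positivity)
  have h3 : 0 < Real.Gamma a := Real.Gamma_pos_of_pos ha
  have h4 : 0 < Real.Gamma c := Real.Gamma_pos_of_pos hc
  positivity

lemma summable_wco (ha : 0 < a) (hc : 0 < c) (hb : 0 ≤ b) (hd : 0 ≤ d) (hbd : 0 < b + d) :
    Summable (wco a b c d) := by
  have h := summable_weighted ha hc hb hd hbd (R := 1) le_rfl
  simp only [one_pow, mul_one] at h
  refine h.of_nonneg_of_le (fun n => (wco_pos ha hc hb hd n).le) (fun n => ?_)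
  have h2 := wco_pos ha hc hb hd n
  show wco a b c d n ≤ ((n : ℝ) + 2) * wco a b c d n
  nlinarith [Nat.cast_nonneg (α := ℝ) n]

lemma summable_nwco (ha : 0 < a) (hc : 0 < c) (hb : 0 ≤ b) (hd : 0 ≤ d) (hbd : 0 < b + d) :
    Summable (fun n : ℕ => ((n : ℝ) + 2) * wco a b c d n) := by
  have h := summable_weighted ha hc hb hd hbd (R := 1) le_rfl
  simpa only [one_pow, mul_one, wco] using h

lemma wright_hasDerivAt (ha : 0 < a) (hc : 0 < c) (hb : 0 ≤ b) (hd : 0 ≤ d) (hbd : 0 < b + d) :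
    HasDerivAt (wrightW a b c d) (1 + ∑' n : ℕ, ((n : ℝ) + 2) * wco a b c d n) 1 := by
  have hu : Summable (fun n : ℕ => ((n : ℝ) + 2) * wco a b c d n * 2 ^ n * 2) :=
    (summable_weighted ha hc hb hd hbd (R := 2) one_le_two).mul_right 2
  have key : HasDerivAt (fun z : ℝ => ∑' n : ℕ, wco a b c d n * z ^ (n + 2))
      (∑' n : ℕ, wco a b c d n * (((n : ℝ) + 2) * (1:ℝ) ^ (n + 1))) 1 := by
    apply hasDerivAt_tsum_of_isPreconnected
      (u := fun n : ℕ => ((n : ℝ) + 2) * wco a b c d n * 2 ^ n * 2)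
      (g' := fun n (y : ℝ) => wco a b c d n * (((n : ℝ) + 2) * y ^ (n + 1)))
      hu (isOpen_Ioo (a := (-2:ℝ)) (b := 2)) (isPreconnected_Ioo) (y₀ := 0)
    · intro n y _
      have h := (hasDerivAt_pow (n + 2) y).const_mul (wco a b c d n)
      have e : ((n + 2 : ℕ) : ℝ) = (n : ℝ) + 2 := by push_cast; ring
      simpa [e] using h
    · intro n y hy
      have hy2 : |y| ≤ 2 := by
        rw [abs_le]; exact ⟨hy.1.le, hy.2.le⟩
      have hcpos := wco_pos ha hc hb hd n
      have e : ‖wco a b c d n * (((n : ℝ) + 2) * y ^ (n + 1))‖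
          = wco a b c d n * (((n : ℝ) + 2) * |y| ^ (n + 1)) := by
        rw [norm_mul, Real.norm_of_nonneg hcpos.le, norm_mul,
          Real.norm_of_nonneg (by positivity : (0:ℝ) ≤ (n:ℝ) + 2), norm_pow, Real.norm_eq_abs]
      rw [e]
      have hpow : |y| ^ (n + 1) ≤ 2 ^ (n + 1) := pow_le_pow_left₀ (abs_nonneg y) hy2 _
      calc wco a b c d n * (((n : ℝ) + 2) * |y| ^ (n + 1))
          ≤ wco a b c d n * (((n : ℝ) + 2) * 2 ^ (n + 1)) := by gcongr
        _ = ((n : ℝ) + 2) * wco a b c d n * 2 ^ n * 2 := by rw [pow_succ]; ring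
    · norm_num
    · simpa using summable_zero
    · norm_num
  have key2 : HasDerivAt (fun z : ℝ => ∑' n : ℕ, wco a b c d n * z ^ (n + 2))
      (∑' n : ℕ, ((n : ℝ) + 2) * wco a b c d n) 1 := by
    convert key using 1
    exact tsum_congr fun n => by rw [one_pow]; ring
  have e : wrightW a b c d = fun x : ℝ => x + ∑' n : ℕ, wco a b c d n * x ^ (n + 2) := rfl
  rw [e]
  exact (hasDerivAt_id' (1:ℝ)).add key2

lemma wright_val : wrightW a b c d 1 = 1 + ∑' n : ℕ, wco a b c d n := by
  unfold wrightW wco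
  simp

end

/-- key coefficient estimate for harmonic starlikeness of L(f). -/
theorem Lf_starlike_coefficient_estimate (α₁ β₁ γ₁ δ₁ α₂ β₂ γ₂ δ₂ α : ℝ) (σ : ℂ) (A B : ℕ → ℂ)
    (hβ₁ : 0 ≤ β₁) (hδ₁ : 0 ≤ δ₁) (hβδ₁ : 0 < β₁ + δ₁)
    (hβ₂ : 0 ≤ β₂) (hδ₂ : 0 ≤ δ₂) (hβδ₂ : 0 < β₂ + δ₂)
    (hα₁ : 0 < α₁) (hγ₁ : 0 < γ₁) (hα₂ : 0 < α₂) (hγ₂ : 0 < γ₂)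
    (hσ : ‖σ‖ < 1) (hα0 : 0 ≤ α) (hα1 : α < 1)
    (hA : ∀ n : ℕ, ‖A n‖ ≤ 1) (hB : ∀ n : ℕ, ‖B n‖ ≤ 1)
    (hyp : (deriv (wrightW α₁ β₁ γ₁ δ₁) 1 - 1) - α * (wrightW α₁ β₁ γ₁ δ₁ 1 - 1)
        + ‖σ‖ * (deriv (wrightW α₂ β₂ γ₂ δ₂) 1 + α * wrightW α₂ β₂ γ₂ δ₂ 1)
        ≤ 1 - α) :
    (∑' n : ℕ, ((n : ℝ) + 2 - α) *
        |Real.Gamma α₁ * Real.Gamma γ₁ /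
          (Real.Gamma (α₁ + ((n : ℝ) + 1) * β₁) * Real.Gamma (γ₁ + ((n : ℝ) + 1) * δ₁))| * ‖A (n + 2)‖)
      + ‖σ‖ * ∑' n : ℕ, ((n : ℝ) + 1 + α) *
        |Real.Gamma α₂ * Real.Gamma γ₂ /
          (Real.Gamma (α₂ + (n : ℝ) * β₂) * Real.Gamma (γ₂ + (n : ℝ) * δ₂))| * ‖B (n + 1)‖
      ≤ 1 - α := by
  -- abbreviations
  set c₁ := wco α₁ β₁ γ₁ δ₁ with hc₁
  set c₂ := wco α₂ β₂ γ₂ δ₂ with hc₂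
  set F : ℕ → ℝ := fun n => Real.Gamma α₂ * Real.Gamma γ₂ /
      (Real.Gamma (α₂ + (n : ℝ) * β₂) * Real.Gamma (γ₂ + (n : ℝ) * δ₂)) with hF
  have s1 : Summable c₁ := summable_wco hα₁ hγ₁ hβ₁ hδ₁ hβδ₁
  have t1 : Summable (fun n : ℕ => ((n : ℝ) + 2) * c₁ n) := summable_nwco hα₁ hγ₁ hβ₁ hδ₁ hβδ₁
  have s2 : Summable c₂ := summable_wco hα₂ hγ₂ hβ₂ hδ₂ hβδ₂
  have t2 : Summable (fun n : ℕ => ((n : ℝ) + 2) * c₂ n) := summable_nwco hα₂ hγ₂ hβ₂ hδ₂ hβδ₂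
  have hc₁pos : ∀ n, 0 < c₁ n := wco_pos hα₁ hγ₁ hβ₁ hδ₁
  have hc₂pos : ∀ n, 0 < c₂ n := wco_pos hα₂ hγ₂ hβ₂ hδ₂
  have hFpos : ∀ n, 0 < F n := by
    intro n
    have h1 : 0 < Real.Gamma (α₂ + (n : ℝ) * β₂) := Real.Gamma_pos_of_pos (by positivity)
    have h2 : 0 < Real.Gamma (γ₂ + (n : ℝ) * δ₂) := Real.Gamma_pos_of_pos (by positivity)
    have h3 : 0 < Real.Gamma α₂ := Real.Gamma_pos_of_pos hα₂
    have h4 : 0 < Real.Gamma γ₂ := Real.Gamma_pos_of_pos hγ₂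
    rw [hF]; positivity
  have hFshift : ∀ n : ℕ, F (n + 1) = c₂ n := by
    intro n
    rw [hF, hc₂]; unfold wco; push_cast; ring_nf
  have hF0 : F 0 = 1 := by
    rw [hF]
    simp only [Nat.cast_zero, zero_mul, add_zero]
    exact div_self (ne_of_gt (mul_pos (Real.Gamma_pos_of_pos hα₂) (Real.Gamma_pos_of_pos hγ₂)))
  -- rewrite the hypothesis
  rw [(wright_hasDerivAt hα₁ hγ₁ hβ₁ hδ₁ hβδ₁).deriv,
    (wright_hasDerivAt hα₂ hγ₂ hβ₂ hδ₂ hβδ₂).deriv,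
    wright_val, wright_val, ← hc₁, ← hc₂] at hyp
  set S₁ := ∑' n : ℕ, c₁ n
  set T₁ := ∑' n : ℕ, ((n : ℝ) + 2) * c₁ n
  set S₂ := ∑' n : ℕ, c₂ n
  set T₂ := ∑' n : ℕ, ((n : ℝ) + 2) * c₂ n
  -- first series
  have hsub1 : Summable (fun n : ℕ => ((n : ℝ) + 2 - α) * c₁ n) :=
    (t1.sub (s1.mul_left α)).congr (fun n => by ring)
  have hptw1 : ∀ n : ℕ, ((n : ℝ) + 2 - α) * |c₁ n| * ‖A (n + 2)‖ ≤ ((n : ℝ) + 2 - α) * c₁ n := by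
    intro n
    rw [abs_of_pos (hc₁pos n)]
    have hco : 0 ≤ (n : ℝ) + 2 - α := by
      have := Nat.cast_nonneg (α := ℝ) n; linarith
    calc ((n : ℝ) + 2 - α) * c₁ n * ‖A (n + 2)‖ ≤ ((n : ℝ) + 2 - α) * c₁ n * 1 :=
          mul_le_mul_of_nonneg_left (hA _) (mul_nonneg hco (hc₁pos n).le)
      _ = ((n : ℝ) + 2 - α) * c₁ n := mul_one _
  have hnn1 : ∀ n : ℕ, 0 ≤ ((n : ℝ) + 2 - α) * |c₁ n| * ‖A (n + 2)‖ := by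
    intro n
    have hco : 0 ≤ (n : ℝ) + 2 - α := by
      have := Nat.cast_nonneg (α := ℝ) n; linarith
    exact mul_nonneg (mul_nonneg hco (abs_nonneg _)) (norm_nonneg _)
  have hS1sum : Summable (fun n : ℕ => ((n : ℝ) + 2 - α) * |c₁ n| * ‖A (n + 2)‖) :=
    hsub1.of_nonneg_of_le hnn1 hptw1
  have hbound1 : (∑' n : ℕ, ((n : ℝ) + 2 - α) * |c₁ n| * ‖A (n + 2)‖) ≤ T₁ - α * S₁ := by
    have h1 : (∑' n : ℕ, ((n : ℝ) + 2 - α) * |c₁ n| * ‖A (n + 2)‖)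
        ≤ ∑' n : ℕ, ((n : ℝ) + 2 - α) * c₁ n := Summable.tsum_le_tsum hptw1 hS1sum hsub1
    have h2 : ∑' n : ℕ, ((n : ℝ) + 2 - α) * c₁ n = T₁ - α * S₁ := by
      rw [show (fun n : ℕ => ((n : ℝ) + 2 - α) * c₁ n)
          = fun n : ℕ => ((n : ℝ) + 2) * c₁ n - α * c₁ n from funext fun n => by ring,
        Summable.tsum_sub t1 (s1.mul_left α), tsum_mul_left]
    linarith
  -- second series
  have hg1 : Summable (fun n : ℕ => ((↑(n + 1) : ℝ) + 1 + α) * F (n + 1)) := by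
    refine (t2.add (s2.mul_left α)).congr (fun n => ?_)
    rw [hFshift n]; push_cast; ring
  have hg : Summable (fun n : ℕ => ((n : ℝ) + 1 + α) * F n) :=
    (summable_nat_add_iff 1).mp hg1
  have hgval : ∑' n : ℕ, ((n : ℝ) + 1 + α) * F n = (1 + α) + (T₂ + α * S₂) := by
    rw [Summable.tsum_eq_zero_add hg]
    have h0 : ((0 : ℕ) : ℝ) + 1 + α = 1 + α := by norm_num
    rw [h0, hF0, mul_one]
    congr 1
    calc ∑' n : ℕ, ((↑(n + 1) : ℝ) + 1 + α) * F (n + 1)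
        = ∑' n : ℕ, (((n : ℝ) + 2) * c₂ n + α * c₂ n) :=
          tsum_congr fun n => by rw [hFshift n]; push_cast; ring
      _ = T₂ + α * S₂ := by rw [Summable.tsum_add t2 (s2.mul_left α), tsum_mul_left]
  have hptw2 : ∀ n : ℕ, ((n : ℝ) + 1 + α) * |F n| * ‖B (n + 1)‖ ≤ ((n : ℝ) + 1 + α) * F n := by
    intro n
    rw [abs_of_pos (hFpos n)]
    have hco : 0 ≤ (n : ℝ) + 1 + α := by
      have := Nat.cast_nonneg (α := ℝ) n; linarith
    calc ((n : ℝ) + 1 + α) * F n * ‖B (n + 1)‖ ≤ ((n : ℝ) + 1 + α) * F n * 1 :=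
          mul_le_mul_of_nonneg_left (hB _) (mul_nonneg hco (hFpos n).le)
      _ = ((n : ℝ) + 1 + α) * F n := mul_one _
  have hnn2 : ∀ n : ℕ, 0 ≤ ((n : ℝ) + 1 + α) * |F n| * ‖B (n + 1)‖ := by
    intro n
    have hco : 0 ≤ (n : ℝ) + 1 + α := by
      have := Nat.cast_nonneg (α := ℝ) n; linarith
    exact mul_nonneg (mul_nonneg hco (abs_nonneg _)) (norm_nonneg _)
  have hS2sum : Summable (fun n : ℕ => ((n : ℝ) + 1 + α) * |F n| * ‖B (n + 1)‖) :=
    hg.of_nonneg_of_le hnn2 hptw2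
  have hbound2 : (∑' n : ℕ, ((n : ℝ) + 1 + α) * |F n| * ‖B (n + 1)‖)
      ≤ (1 + α) + (T₂ + α * S₂) := by
    have h1 := Summable.tsum_le_tsum hptw2 hS2sum hg
    rw [hgval] at h1
    exact h1
  -- combine
  have hσ0 : (0:ℝ) ≤ ‖σ‖ := norm_nonneg σ
  have hmain : (∑' n : ℕ, ((n : ℝ) + 2 - α) * |c₁ n| * ‖A (n + 2)‖)
      + ‖σ‖ * ∑' n : ℕ, ((n : ℝ) + 1 + α) * |F n| * ‖B (n + 1)‖
      ≤ (T₁ - α * S₁) + ‖σ‖ * ((1 + α) + (T₂ + α * S₂)) :=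
    add_le_add hbound1 (mul_le_mul_of_nonneg_left hbound2 hσ0)
  have hexp : ‖σ‖ * ((1 + T₂) + α * (1 + S₂)) = ‖σ‖ * ((1 + α) + (T₂ + α * S₂)) := by ring
  calc (∑' n : ℕ, ((n : ℝ) + 2 - α) * |c₁ n| * ‖A (n + 2)‖)
      + ‖σ‖ * ∑' n : ℕ, ((n : ℝ) + 1 + α) * |F n| * ‖B (n + 1)‖
      ≤ (T₁ - α * S₁) + ‖σ‖ * ((1 + α) + (T₂ + α * S₂)) := hmain
    _ ≤ 1 - α := by rw [← hexp]; linarith
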